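/- Let σ be an order-n sign pattern and let A ∈ Q(σ) be a nilpotent matrix that allows a full-rank Jacobian. Then A is nonderogatory; that is, the minimal polynomial of A equals its characteristic polynomial (equivalently, every eigenvalue of A has geometric multiplicity one). -/

import Mathlib

open Matrix Polynomial

/-- The qualitative class of a sign pattern `σ`: real matrices whose entrywise sign is `σ`. -/
def Qclass {n : ℕ} (σ : Matrix (Fin n) (Fin n) ℝ) : Set (Matrix (Fin n) (Fin n) ℝ) :=
  {A | ∀ i j, Real.sign (A i j) = σ i j}

/-- The sign pattern of a real matrix. -/
noncomputable def signPattern {n : ℕ} (B : Matrix (Fin n) (Fin n) ℝ) : Matrix (Fin n) (Fin n) ℝ :=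
  Matrix.of fun i j => Real.sign (B i j)

/-- `σ'` is a superpattern of `σ`. -/
def Superpattern {n : ℕ} (σ' σ : Matrix (Fin n) (Fin n) ℝ) : Prop :=
  ∀ i j, σ i j ≠ 0 → σ' i j = σ i j

/-- A sign pattern is spectrally arbitrary if every monic real polynomial of degree `n`
is the characteristic polynomial of some realization. -/
def SpectrallyArbitrary {n : ℕ} (σ : Matrix (Fin n) (Fin n) ℝ) : Prop :=
  ∀ p : Polynomial ℝ, p.Monic → p.natDegree = n → ∃ A ∈ Qclass σ, A.charpoly = p

/-- The matrix obtained from `A` by replacing the entries in positions `S` by the variables `x`. -/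
def matWithVars {n : ℕ} (A : Matrix (Fin n) (Fin n) ℝ) (S : Finset (Fin n × Fin n))
    (x : S → ℝ) : Matrix (Fin n) (Fin n) ℝ :=
  Matrix.of fun i j => if h : (i, j) ∈ S then x ⟨(i, j), h⟩ else A i j

/-- The coefficient vector `(f_1, …, f_n)` where
`charpoly (matWithVars A S x) = z^n + f_1 z^(n-1) + ⋯ + f_n`. -/
noncomputable def coeffVec {n : ℕ} (A : Matrix (Fin n) (Fin n) ℝ) (S : Finset (Fin n × Fin n))
    (x : S → ℝ) : Fin n → ℝ :=
  fun i => (matWithVars A S x).charpoly.coeff (n - 1 - (i : ℕ))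

/-- `A ∈ Q(σ)` allows a full-rank Jacobian: for some set `S` of positions where `σ` is nonzero,
the Fréchet derivative at `A` of the coefficient map is surjective. -/
def AllowsFullRankJacobian {n : ℕ} (σ A : Matrix (Fin n) (Fin n) ℝ) : Prop :=
  ∃ S : Finset (Fin n × Fin n), (∀ p ∈ S, σ p.1 p.2 ≠ 0) ∧
    ∃ L : (↥S → ℝ) →L[ℝ] (Fin n → ℝ),
      HasFDerivAt (coeffVec A S) L (fun p => A p.1.1 p.1.2) ∧ Function.Surjective L


lemma charpoly_nilp {n : ℕ} (A : Matrix (Fin n) (Fin n) ℝ) (h : IsNilpotent A) :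
    A.charpoly = X ^ n := by
  have h2 := Matrix.isNilpotent_charpoly_sub_pow_of_isNilpotent h
  rw [Fintype.card_fin] at h2
  have h3 : A.charpoly - X ^ n = 0 := h2.eq_zero
  linear_combination h3

lemma adjugate_eq_zero_of_pow {n : ℕ} (A : Matrix (Fin n) (Fin n) ℝ)
    (hc : A.charpoly = X ^ n) (h1 : A ^ (n - 1) = 0) : adjugate A = 0 := by
  rcases Nat.eq_zero_or_pos n with h0 | hn
  · subst h0; exact Subsingleton.elim _ _
  have hAn : A ^ n = 0 := by
    have h := A.aeval_self_charpoly
    rw [hc] at h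
    simpa using h
  have key : matPolyEquiv (adjugate (charmatrix A)) * (X - C A) = X ^ n := by
    have h : adjugate (charmatrix A) * charmatrix A = A.charpoly • (1 : Matrix _ _ ℝ[X]) :=
      adjugate_mul _
    apply_fun matPolyEquiv at h
    rw [_root_.map_mul, matPolyEquiv_charmatrix, matPolyEquiv_smul_one, hc] at h
    simpa using h
  have key2 : (∑ i ∈ Finset.range n,
      (X : (Matrix (Fin n) (Fin n) ℝ)[X]) ^ i * (C A) ^ (n - 1 - i)) * (X - C A) = X ^ n := by
    rw [(commute_X (C A)).geom_sum₂_mul]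
    rw [← map_pow, hAn]
    simp
  have hreg : Function.Injective (· * ((X : (Matrix (Fin n) (Fin n) ℝ)[X]) - C A)) :=
    (monic_X_sub_C A).isRegular.right
  have heq := hreg (key.trans key2.symm)
  have heq' : matPolyEquiv (adjugate (charmatrix A)) =
      ∑ k ∈ Finset.range n, monomial k (A ^ (n - 1 - k)) := by
    rw [heq]
    refine Finset.sum_congr rfl fun k _ => ?_
    rw [X_pow_mul, ← map_pow, C_mul_X_pow_eq_monomial]
  have hcoeff : ∀ i j, (adjugate (charmatrix A) i j).coeff 0 = 0 := by
    intro i j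
    have h4 := congrArg (fun p : (Matrix (Fin n) (Fin n) ℝ)[X] => p.coeff 0 i j) heq'
    simp only [matPolyEquiv_coeff_apply] at h4
    rw [h4]
    rw [finset_sum_coeff]
    simp only [coeff_monomial]
    rw [Finset.sum_eq_single 0]
    · simp [h1]
    · intro b _ hb; rw [if_neg hb]
    · intro h; exact absurd (Finset.mem_range.mpr hn) h
  have hmap : (constantCoeff : ℝ[X] →+* ℝ).mapMatrix (adjugate (charmatrix A)) = 0 := by
    ext i j
    simpa using hcoeff i j
  rw [RingHom.map_adjugate] at hmap
  have hcm : (constantCoeff : ℝ[X] →+* ℝ).mapMatrix (charmatrix A) = -A := by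
    ext i j
    rcases eq_or_ne i j with h | h <;>
      simp [charmatrix_apply, Matrix.diagonal_apply, h]
  rw [hcm] at hmap
  have : adjugate ((-1 : ℝ) • A) = 0 := by rwa [neg_one_smul]
  rw [adjugate_smul] at this
  rcases smul_eq_zero.mp this with h | h
  · exact absurd h (pow_ne_zero _ (by norm_num))
  · exact h


lemma minpoly_part {n : ℕ} (A : Matrix (Fin n) (Fin n) ℝ) (hn : 1 ≤ n)
    (hc : A.charpoly = X ^ n) (hne : minpoly ℝ A ≠ A.charpoly) : A ^ (n - 1) = 0 := by
  have hint : IsIntegral ℝ A := IsIntegral.of_finite ℝ A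
  have hdvd : minpoly ℝ A ∣ X ^ n := by
    rw [← hc]
    exact minpoly.dvd ℝ A (A.aeval_self_charpoly)
  obtain ⟨k, hk, hassoc⟩ := (dvd_prime_pow prime_X n).mp hdvd
  have hmin : minpoly ℝ A = X ^ k :=
    eq_of_monic_of_associated (minpoly.monic hint) (monic_X_pow k) hassoc
  have hkn : k < n := by
    rcases lt_or_eq_of_le hk with h | h
    · exact h
    · exact absurd (hmin.trans (by rw [h, hc])) hne
  have hk1 : 1 ≤ k := by
    have : Nontrivial (Matrix (Fin n) (Fin n) ℝ) := by
      have : Nonempty (Fin n) := ⟨⟨0, hn⟩⟩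
      infer_instance
    have := minpoly.natDegree_pos hint
    rwa [hmin, natDegree_X_pow] at this
  have hAk : A ^ k = 0 := by
    have := minpoly.aeval ℝ A
    rwa [hmin, map_pow, aeval_X] at this
  calc A ^ (n - 1) = A ^ k * A ^ (n - 1 - k) := by rw [← pow_add]; congr 1; omega
  _ = 0 := by rw [hAk, zero_mul]

lemma analytic_part {n : ℕ} (A : Matrix (Fin n) (Fin n) ℝ) (hn : 1 ≤ n)
    (hadj : adjugate A = 0)
    (S : Finset (Fin n × Fin n)) (L : (↥S → ℝ) →L[ℝ] (Fin n → ℝ))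
    (hL : HasFDerivAt (coeffVec A S) L (fun p => A p.1.1 p.1.2))
    (hsurj : Function.Surjective L) : False := by
  classical
  set x₀ : ↥S → ℝ := fun p => A p.1.1 p.1.2 with hx₀
  set i₀ : Fin n := ⟨n - 1, by omega⟩ with hi₀
  have hsingle : ∀ p : ↥S, L (Pi.single p 1) i₀ = 0 := by
    rintro ⟨⟨pi, pj⟩, hpS⟩
    set p : ↥S := ⟨(pi, pj), hpS⟩ with hp
    set v : ↥S → ℝ := Pi.single p 1 with hv
    have hc : HasDerivAt (fun t : ℝ => x₀ + t • v) v 0 := by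
      simpa using ((hasDerivAt_id (0 : ℝ)).smul_const v).const_add x₀
    have hL' : HasFDerivAt (coeffVec A S) L ((fun t : ℝ => x₀ + t • v) 0) := by
      simpa using hL
    have hcomp : HasDerivAt (fun t : ℝ => coeffVec A S (x₀ + t • v)) (L v) 0 :=
      by have h := HasFDerivAt.comp_hasDerivAt (0:ℝ) hL' hc; exact h
    have hproj : HasDerivAt (fun t : ℝ => coeffVec A S (x₀ + t • v) i₀) (L v i₀) 0 :=
      ((ContinuousLinearMap.proj i₀ :
        (Fin n → ℝ) →L[ℝ] ℝ).hasFDerivAt).comp_hasDerivAt 0 hcomp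
    have hmat : ∀ t : ℝ, matWithVars A S (x₀ + t • v) =
        A.updateRow pi (A pi + Pi.single pj t) := by
      intro t
      ext a b
      show (if h : (a, b) ∈ S then (x₀ + t • v) ⟨(a, b), h⟩ else A a b) = _
      by_cases hq : (a, b) ∈ S
      · rw [dif_pos hq]
        have h1 : (x₀ + t • v) ⟨(a, b), hq⟩ =
            A a b + t * (if a = pi ∧ b = pj then 1 else 0) := by
          simp only [Pi.add_apply, Pi.smul_apply, smul_eq_mul, hv, Pi.single_apply, hp,
            Subtype.mk_eq_mk, Prod.mk.injEq, hx₀]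
        rw [h1, Matrix.updateRow_apply]
        by_cases ha : a = pi
        · subst ha
          rw [if_pos rfl]
          by_cases hb : b = pj
          · subst hb
            simp
          · simp [hb, Pi.single_apply]
        · rw [if_neg ha]
          simp [ha]
      · rw [dif_neg hq, Matrix.updateRow_apply]
        by_cases ha : a = pi
        · subst ha
          rw [if_pos rfl]
          have hb : b ≠ pj := fun h => hq (by rw [h]; exact hpS)
          simp [Pi.single_apply, hb]
        · rw [if_neg ha]
    have hdet : ∀ t : ℝ,
        (A.updateRow pi (A pi + Pi.single pj t)).det = A.det := by
      intro t
      rw [Matrix.det_updateRow_add, Matrix.updateRow_eq_self]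
      have hsm : (Pi.single pj t : Fin n → ℝ) = t • (Pi.single pj 1 : Fin n → ℝ) := by
        funext b
        by_cases h : b = pj <;> simp [Pi.single_apply, h]
      rw [hsm, Matrix.det_updateRow_smul, ← Matrix.adjugate_apply, hadj]
      simp
    have hconst : (fun t : ℝ => coeffVec A S (x₀ + t • v) i₀) =
        fun _ : ℝ => (-1 : ℝ) ^ n * A.det := by
      funext t
      have h1 : coeffVec A S (x₀ + t • v) i₀ =
          (matWithVars A S (x₀ + t • v)).charpoly.coeff 0 := by
        simp only [coeffVec, i₀]
        congr 1
        omega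
      rw [h1, hmat t]
      have h2 := Matrix.det_eq_sign_charpoly_coeff (A.updateRow pi (A pi + Pi.single pj t))
      rw [Fintype.card_fin, hdet t] at h2
      have h3 : ((-1 : ℝ) ^ n) * ((-1 : ℝ) ^ n) = 1 := by
        rw [← pow_add, ← two_mul, pow_mul]
        norm_num
      calc (A.updateRow pi (A pi + Pi.single pj t)).charpoly.coeff 0
          = ((-1 : ℝ) ^ n * (-1 : ℝ) ^ n) *
            (A.updateRow pi (A pi + Pi.single pj t)).charpoly.coeff 0 := by
            rw [h3, one_mul]
        _ = (-1 : ℝ) ^ n * A.det := by rw [mul_assoc, ← h2]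
    rw [hconst] at hproj
    exact hproj.unique (hasDerivAt_const _ _)
  have hLzero : ∀ v : ↥S → ℝ, L v i₀ = 0 := by
    intro v
    have hv : v = ∑ p : ↥S, v p • (Pi.single p (1:ℝ) : ↥S → ℝ) := by
      funext q
      rw [Finset.sum_apply, Finset.sum_eq_single q]
      · simp
      · intro b _ hb
        simp [Pi.single_apply, Ne.symm hb]
      · intro h; exact absurd (Finset.mem_univ q) h
    rw [hv, map_sum, Finset.sum_apply]
    refine Finset.sum_eq_zero fun p _ => ?_
    have hls : L (v p • (Pi.single p (1:ℝ) : ↥S → ℝ)) = v p • L (Pi.single p (1:ℝ) : ↥S → ℝ) := L.map_smul _ _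
    rw [hls, Pi.smul_apply, hsingle p, smul_zero]
  obtain ⟨x, hx⟩ := hsurj (Pi.single i₀ 1)
  have hz := hLzero x
  rw [hx] at hz
  simp at hz

/-- A nilpotent realization of a sign pattern allowing a full-rank Jacobian
is nonderogatory, i.e. its minimal polynomial equals its characteristic polynomial. -/
theorem statement4 {n : ℕ} (σ A : Matrix (Fin n) (Fin n) ℝ)
    (hA : A ∈ Qclass σ) (hnil : IsNilpotent A) (hJ : AllowsFullRankJacobian σ A) :
    minpoly ℝ A = A.charpoly := by
  rcases Nat.eq_zero_or_pos n with h0 | hn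
  · subst h0
    have hchar : A.charpoly = 1 := by
      simp [Matrix.charpoly, Matrix.det_isEmpty]
    have hdvd : minpoly ℝ A ∣ 1 := minpoly.dvd ℝ A (Subsingleton.elim _ _)
    have hint : IsIntegral ℝ A := IsIntegral.of_finite ℝ A
    rw [hchar]
    exact (minpoly.monic hint).eq_one_of_isUnit (isUnit_of_dvd_one hdvd)
  · by_contra hne
    have hc := charpoly_nilp A hnil
    have h1 := minpoly_part A hn hc hne
    have hadj := adjugate_eq_zero_of_pow A hc h1
    obtain ⟨S, hS, L, hL, hsurj⟩ := hJ
    exact analytic_part A hn hadj S L hL hsurj
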